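/- Let G = G[X,Y] be a connected bipartite graph on n vertices. Then ρ_D(G) ≥ 3n − 4 if n is even, and ρ_D(G) ≥ (5n − 8 + √(n² + 8))/2 if n is odd. -/

import Mathlib

open SimpleGraph Finset Matrix

/-- The transmission of a vertex: sum of distances to all other vertices. -/
noncomputable def transmission {V : Type*} [Fintype V] (G : SimpleGraph V) (u : V) : ℕ :=
  ∑ v, G.dist u v

/-- The transmission σ(G): sum of distances over all unordered pairs. -/
noncomputable def transmissionOf {V : Type*} [Fintype V] (G : SimpleGraph V) : ℝ :=
  (1 / 2) * ∑ u, ∑ v, (G.dist u v : ℝ)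

/-- The distance signless Laplacian matrix Q_D(G) = Tr(G) + 𝒟(G). -/
noncomputable def distSignlessLaplacian {V : Type*} [Fintype V] [DecidableEq V]
    (G : SimpleGraph V) : Matrix V V ℝ :=
  fun u v => (if u = v then (transmission G u : ℝ) else 0) + (G.dist u v : ℝ)

/-- `ρ` is the distance signless Laplacian spectral radius of `G`,
i.e. the largest eigenvalue of `Q_D(G)`. -/
noncomputable def IsDistSLSpectralRadius {V : Type*} [Fintype V] [DecidableEq V]
    (G : SimpleGraph V) (ρ : ℝ) : Prop :=
  IsGreatest {μ : ℝ | Module.End.HasEigenvalue (Matrix.toLin' (distSignlessLaplacian G)) μ} ρ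

/-- Join of two graphs. -/
def joinGraph {α β : Type*} (G : SimpleGraph α) (H : SimpleGraph β) : SimpleGraph (α ⊕ β) :=
  SimpleGraph.fromRel (fun x y =>
    match x, y with
    | Sum.inl a, Sum.inl b => G.Adj a b
    | Sum.inr a, Sum.inr b => H.Adj a b
    | Sum.inl _, Sum.inr _ => True
    | Sum.inr _, Sum.inl _ => False)

/-- The graph H_{t,n-t}. -/
def HGraph (n t : ℕ) : SimpleGraph (Fin n ⊕ Fin n) :=
  SimpleGraph.fromRel (fun x y =>
    match x, y with
    | Sum.inl i, Sum.inr j => (j : ℕ) < n - t ∨ (i : ℕ) < t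
    | _, _ => False)

/-- Hamilton-connected. -/
def IsHamiltonianConnected {V : Type*} [DecidableEq V] (G : SimpleGraph V) : Prop :=
  ∀ u v : V, u ≠ v → ∃ p : G.Walk u v, p.IsHamiltonian

/-- Traceable from every vertex. -/
def TraceableFromEveryVertex {V : Type*} [DecidableEq V] (G : SimpleGraph V) : Prop :=
  ∀ u : V, ∃ v : V, ∃ p : G.Walk u v, p.IsHamiltonian

/-- K_{n-1} + e : complete graph on n-1 vertices with a pendant edge. -/
def KPlusPendant (n : ℕ) : SimpleGraph (Fin (n - 1) ⊕ Fin 1) :=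
  SimpleGraph.fromRel (fun x y =>
    match x, y with
    | Sum.inl a, Sum.inl b => a ≠ b
    | Sum.inl a, Sum.inr _ => (a : ℕ) = 0
    | _, _ => False)

lemma rayleigh_le {V : Type*} [Fintype V] [DecidableEq V] (A : Matrix V V ℝ)
    (hA : A.IsHermitian) (ρ : ℝ)
    (hub : ∀ μ : ℝ, Module.End.HasEigenvalue (Matrix.toLin' A) μ → μ ≤ ρ)
    (x : V → ℝ) : x ⬝ᵥ (A *ᵥ x) ≤ ρ * (x ⬝ᵥ x) := by
  set B : Matrix V V ℝ := ρ • (1 : Matrix V V ℝ) - A with hBdef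
  have hB : B.IsHermitian := by
    have h1 : (ρ • (1 : Matrix V V ℝ)).IsHermitian := by
      unfold Matrix.IsHermitian
      ext u v
      simp [Matrix.one_apply, Matrix.conjTranspose_apply, eq_comm]
    exact h1.sub hA
  have hev : ∀ i, 0 ≤ hB.eigenvalues i := by
    intro i
    have hnz : (⇑(hB.eigenvectorBasis i) : V → ℝ) ≠ 0 := by
      intro h
      have := hB.eigenvectorBasis.orthonormal.ne_zero i
      apply this
      ext j
      exact congrFun h j
    have hmv := hB.mulVec_eigenvectorBasis i
    have hAv : A *ᵥ ⇑(hB.eigenvectorBasis i)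
        = (ρ - hB.eigenvalues i) • ⇑(hB.eigenvectorBasis i) := by
      have : B *ᵥ ⇑(hB.eigenvectorBasis i)
          = ρ • ⇑(hB.eigenvectorBasis i) - A *ᵥ ⇑(hB.eigenvectorBasis i) := by
        simp [hBdef, Matrix.sub_mulVec, Matrix.smul_mulVec]
      rw [this] at hmv
      rw [sub_smul]
      linear_combination (norm := module) - hmv
    have heig : Module.End.HasEigenvalue (Matrix.toLin' A) (ρ - hB.eigenvalues i) := by
      apply Module.End.hasEigenvalue_of_hasEigenvector (x := ⇑(hB.eigenvectorBasis i))
      constructor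
      · rw [Module.End.mem_eigenspace_iff, Matrix.toLin'_apply]
        exact hAv
      · exact hnz
    have := hub _ heig
    linarith
  have hpsd : B.PosSemidef := hB.posSemidef_iff_eigenvalues_nonneg.mpr hev
  have h0 := hpsd.dotProduct_mulVec_nonneg x
  have hstar : star x = x := rfl
  rw [hstar] at h0
  have : x ⬝ᵥ (B *ᵥ x) = ρ * (x ⬝ᵥ x) - x ⬝ᵥ (A *ᵥ x) := by
    simp [hBdef, Matrix.sub_mulVec, Matrix.smul_mulVec, dotProduct_sub,
      dotProduct_smul, smul_eq_mul]
  rw [this] at h0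
  linarith

lemma fin2_aux : ∀ a b c : Fin 2, a ≠ b → (a = c ↔ ¬ b = c) := by decide

lemma fin2_aux3 : ∀ a b : Fin 2, a ≠ 0 → b ≠ 0 → a = b := by decide

lemma fin2_aux2 : ∀ a b : Fin 2, a ≠ b → a ≠ 0 → b = 0 := by decide

lemma color_walk_parity {V : Type*} {G : SimpleGraph V} (C : G.Coloring (Fin 2))
    {u v : V} (p : G.Walk u v) : (C u = C v ↔ Even p.length) := by
  induction p with
  | nil => simp
  | cons h q ih =>
    rw [Walk.length_cons, Nat.even_add_one, ← ih]
    exact fin2_aux _ _ _ (C.valid h)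


set_option maxHeartbeats 2000000

/-- Lemma 2: lower bound on the distance signless Laplacian spectral radius
of a connected bipartite graph on n vertices. -/
theorem stmt_1 {V : Type*} [Fintype V] [DecidableEq V] (G : SimpleGraph V)
    (hconn : G.Connected) (hbip : G.Colorable 2) (ρ : ℝ)
    (hρ : IsDistSLSpectralRadius G ρ) :
    (Even (Fintype.card V) → 3 * (Fintype.card V : ℝ) - 4 ≤ ρ) ∧
    (Odd (Fintype.card V) →
      (5 * (Fintype.card V : ℝ) - 8 + Real.sqrt ((Fintype.card V : ℝ) ^ 2 + 8)) / 2 ≤ ρ) := by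
  classical
  obtain ⟨C⟩ := hbip
  have hub : ∀ μ : ℝ, Module.End.HasEigenvalue
      (Matrix.toLin' (distSignlessLaplacian G)) μ → μ ≤ ρ := fun μ hμ => hρ.2 hμ
  have hherm : (distSignlessLaplacian G).IsHermitian := by
    unfold Matrix.IsHermitian
    ext u v
    by_cases h : u = v
    · subst h; rfl
    · simp only [distSignlessLaplacian, Matrix.conjTranspose_apply, if_neg h,
        if_neg (Ne.symm h), star_trivial, zero_add, Nat.cast_inj]
      exact SimpleGraph.dist_comm
  set X := Finset.filter (fun v => C v = 0) Finset.univ with hX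
  set Y := Finset.filter (fun v => ¬ C v = 0) Finset.univ with hY
  set pr : ℝ := (X.card : ℝ) with hprdef
  set qr : ℝ := (Y.card : ℝ) with hqrdef
  have hcard : X.card + Y.card = Fintype.card V := by
    rw [hX, hY]
    simpa using Finset.card_filter_add_card_filter_not
      (s := Finset.univ) (p := fun v => C v = 0)
  have hncast : (Fintype.card V : ℝ) = pr + qr := by
    rw [hprdef, hqrdef, ← hcard]; push_cast; ring
  have hsplit : ∀ f : V → ℝ, ∑ v, f v = ∑ v ∈ X, f v + ∑ v ∈ Y, f v := fun f =>
    (Finset.sum_filter_add_sum_filter_not Finset.univ (fun v => C v = 0) f).symm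
  have hdist : ∀ u v : V,
      ((if u = v then 0 else if C u = C v then 2 else 1 : ℝ)) ≤ (G.dist u v : ℝ) := by
    intro u v
    by_cases h : u = v
    · simp [h]
    · have hpos : 0 < G.dist u v := hconn.pos_dist_of_ne h
      by_cases hc : C u = C v
      · obtain ⟨w, hw⟩ := hconn.exists_walk_length_eq_dist u v
        have hev : Even (G.dist u v) := hw ▸ (color_walk_parity C w).mp hc
        have h2 : 2 ≤ G.dist u v := by
          rcases hev with ⟨k, hk⟩; omega
        simp only [h, hc, if_false, if_true]
        exact_mod_cast h2
      · simp only [h, hc, if_false]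
        exact_mod_cast hpos
  have key : ∀ α β : ℝ, 0 < α → 0 < β →
      4*α^2*(pr^2-pr) + pr*qr*(α^2+α*β) + pr*qr*(β^2+α*β) + 4*β^2*(qr^2-qr)
        ≤ ρ * (pr*α^2 + qr*β^2) := by
    intro α β hα hβ
    set x : V → ℝ := fun v => if C v = 0 then α else β with hxdef
    have hx : ∀ v, 0 < x v := by
      intro v
      rw [hxdef]
      dsimp only
      split <;> assumption
    have hxX : ∀ v ∈ X, x v = α := by
      intro v hv
      have := (Finset.mem_filter.mp hv).2
      simp [hxdef, this]
    have hxY : ∀ v ∈ Y, x v = β := by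
      intro v hv
      have := (Finset.mem_filter.mp hv).2
      simp [hxdef, this]
    set g : V → V → ℝ := fun u v =>
      (if u = v then (0:ℝ) else if C u = C v then 2 else 1) * (x u ^ 2 + x u * x v)
      with hgdef
    have h1 := rayleigh_le _ hherm ρ hub x
    have h2 : x ⬝ᵥ (distSignlessLaplacian G *ᵥ x)
        = ∑ u, ∑ v, (G.dist u v : ℝ) * (x u ^ 2 + x u * x v) := by
      simp only [dotProduct, Matrix.mulVec, distSignlessLaplacian]
      refine Finset.sum_congr rfl fun u _ => ?_
      rw [Finset.mul_sum]
      have e1 : ∀ v ∈ (Finset.univ : Finset V),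
          x u * (((if u = v then (transmission G u : ℝ) else 0) + (G.dist u v : ℝ)) * x v)
          = (if u = v then (transmission G u : ℝ) * (x u * x u) else 0)
            + (G.dist u v : ℝ) * (x u * x v) := by
        intro v _
        by_cases h : u = v
        · subst h; simp; ring
        · simp [h]; ring
      rw [Finset.sum_congr rfl e1, Finset.sum_add_distrib,
        Finset.sum_ite_eq Finset.univ u (fun _ => (transmission G u : ℝ) * (x u * x u))]
      have e2 : (transmission G u : ℝ) = ∑ v, (G.dist u v : ℝ) := by
        unfold transmission; push_cast; rfl
      simp only [Finset.mem_univ, if_true, e2]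
      rw [Finset.sum_mul, ← Finset.sum_add_distrib]
      exact Finset.sum_congr rfl fun v _ => by ring
    have h3 : ∑ u, ∑ v, g u v
        ≤ ∑ u, ∑ v, (G.dist u v : ℝ) * (x u ^ 2 + x u * x v) := by
      refine Finset.sum_le_sum fun u _ => Finset.sum_le_sum fun v _ => ?_
      rw [hgdef]
      exact mul_le_mul_of_nonneg_right (hdist u v) (by nlinarith [hx u, hx v])
    have hXX : ∀ u ∈ X, ∑ v ∈ X, g u v = 4*α^2*pr - 4*α^2 := by
      intro u hu
      have hcu : C u = 0 := (Finset.mem_filter.mp hu).2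
      have e : ∀ v ∈ X, g u v = 4*α^2 - (if u = v then 4*α^2 else 0) := by
        intro v hv
        have hcv : C v = 0 := (Finset.mem_filter.mp hv).2
        rw [hgdef]
        dsimp only
        rw [hxX u hu, hxX v hv]
        by_cases h : u = v
        · simp [h]
        · simp [h, hcu, hcv]; ring
      rw [Finset.sum_congr rfl e, Finset.sum_sub_distrib, Finset.sum_const,
        Finset.sum_ite_eq X u (fun _ => 4*α^2), if_pos hu, nsmul_eq_mul, hprdef]
      ring
    have hXY : ∀ u ∈ X, ∑ v ∈ Y, g u v = qr*(α^2 + α*β) := by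
      intro u hu
      have hcu : C u = 0 := (Finset.mem_filter.mp hu).2
      have e : ∀ v ∈ Y, g u v = α^2 + α*β := by
        intro v hv
        have hcv : ¬ C v = 0 := (Finset.mem_filter.mp hv).2
        have hne : u ≠ v := fun h => hcv (h ▸ hcu)
        have hcne : ¬ C u = C v := fun h => hcv (hcu ▸ h.symm)
        rw [hgdef]
        dsimp only
        rw [hxX u hu, hxY v hv]
        simp [hne, hcne]
      rw [Finset.sum_congr rfl e, Finset.sum_const, nsmul_eq_mul, hqrdef]
    have hYX : ∀ u ∈ Y, ∑ v ∈ X, g u v = pr*(β^2 + β*α) := by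
      intro u hu
      have hcu : ¬ C u = 0 := (Finset.mem_filter.mp hu).2
      have e : ∀ v ∈ X, g u v = β^2 + β*α := by
        intro v hv
        have hcv : C v = 0 := (Finset.mem_filter.mp hv).2
        have hne : u ≠ v := fun h => hcu (h ▸ hcv)
        have hcne : ¬ C u = C v := fun h => hcu (hcv ▸ h)
        rw [hgdef]
        dsimp only
        rw [hxY u hu, hxX v hv]
        simp [hne, hcne]
      rw [Finset.sum_congr rfl e, Finset.sum_const, nsmul_eq_mul, hprdef]
    have hYY : ∀ u ∈ Y, ∑ v ∈ Y, g u v = 4*β^2*qr - 4*β^2 := by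
      intro u hu
      have hcu : ¬ C u = 0 := (Finset.mem_filter.mp hu).2
      have e : ∀ v ∈ Y, g u v = 4*β^2 - (if u = v then 4*β^2 else 0) := by
        intro v hv
        have hcv : ¬ C v = 0 := (Finset.mem_filter.mp hv).2
        have hcc : C u = C v := fin2_aux3 _ _ hcu hcv
        rw [hgdef]
        dsimp only
        rw [hxY u hu, hxY v hv]
        by_cases h : u = v
        · simp [h]
        · simp [h, hcc]; ring
      rw [Finset.sum_congr rfl e, Finset.sum_sub_distrib, Finset.sum_const,
        Finset.sum_ite_eq Y u (fun _ => 4*β^2), if_pos hu, nsmul_eq_mul, hqrdef]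
      ring
    have h4 : ∑ u, ∑ v, g u v
        = 4*α^2*(pr^2-pr) + pr*qr*(α^2+α*β) + pr*qr*(β^2+α*β) + 4*β^2*(qr^2-qr) := by
      rw [hsplit (fun u => ∑ v, g u v)]
      have eX : ∀ u ∈ X, ∑ v, g u v = (4*α^2*pr - 4*α^2) + qr*(α^2 + α*β) := by
        intro u hu
        rw [hsplit (fun v => g u v), hXX u hu, hXY u hu]
      have eY : ∀ u ∈ Y, ∑ v, g u v = pr*(β^2 + β*α) + (4*β^2*qr - 4*β^2) := by
        intro u hu
        rw [hsplit (fun v => g u v), hYX u hu, hYY u hu]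
      rw [Finset.sum_congr rfl eX, Finset.sum_congr rfl eY,
        Finset.sum_const, Finset.sum_const, nsmul_eq_mul, nsmul_eq_mul, hprdef, hqrdef]
      ring
    have h5 : x ⬝ᵥ x = pr*α^2 + qr*β^2 := by
      simp only [dotProduct]
      rw [hsplit (fun v => x v * x v)]
      have eX : ∀ v ∈ X, x v * x v = α^2 := fun v hv => by rw [hxX v hv]; ring
      have eY : ∀ v ∈ Y, x v * x v = β^2 := fun v hv => by rw [hxY v hv]; ring
      rw [Finset.sum_congr rfl eX, Finset.sum_congr rfl eY,
        Finset.sum_const, Finset.sum_const, nsmul_eq_mul, nsmul_eq_mul, hprdef, hqrdef]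
    rw [h2] at h1
    rw [h5] at h1
    linarith [h3, h4.symm.le, h4.le]
  have hnV : Nonempty V := hconn.nonempty
  have hcardpos : 0 < Fintype.card V := Fintype.card_pos
  constructor
  · intro _
    have hk := key 1 1 one_pos one_pos
    have hnpos : (0:ℝ) < pr + qr := by
      rw [← hncast]
      exact_mod_cast hcardpos
    rw [hncast]
    nlinarith [sq_nonneg (pr - qr), hk, hnpos]
  · intro hodd
    by_cases hcase : Fintype.card V = 1
    · have hsum1 : X.card + Y.card = 1 := by rw [hcard, hcase]
      have hpq : X.card = 0 ∧ Y.card = 1 ∨ X.card = 1 ∧ Y.card = 0 := by omega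
      have h9 : Real.sqrt ((Fintype.card V : ℝ)^2 + 8) = 3 := by
        rw [hcase]
        rw [show ((1:ℕ):ℝ)^2 + 8 = 3^2 by norm_num, Real.sqrt_sq (by norm_num)]
      rw [h9, hcase]
      have hk := key 1 1 one_pos one_pos
      rcases hpq with ⟨h1', h2'⟩ | ⟨h1', h2'⟩ <;>
        · rw [hprdef, hqrdef, h1', h2'] at hk
          norm_num at hk ⊢
          linarith
    · have hn2 : 2 ≤ Fintype.card V := by omega
      obtain ⟨u, w, huw⟩ : ∃ u w, G.Adj u w := by
        obtain ⟨u, v, huv⟩ := Fintype.exists_pair_of_one_lt_card (α := V) (by omega)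
        obtain ⟨walk⟩ := hconn u v
        cases walk with
        | nil => exact absurd rfl huv
        | cons h q => exact ⟨_, _, h⟩
      have hcuw : C u ≠ C w := C.valid huw
      have hXpos : 0 < X.card := by
        rcases eq_or_ne (C u) 0 with h|h
        · exact Finset.card_pos.mpr ⟨u, Finset.mem_filter.mpr ⟨Finset.mem_univ u, h⟩⟩
        · have : C w = 0 := fin2_aux2 _ _ hcuw h
          exact Finset.card_pos.mpr ⟨w, Finset.mem_filter.mpr ⟨Finset.mem_univ w, this⟩⟩
      have hYpos : 0 < Y.card := by
        rcases eq_or_ne (C u) 0 with h|h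
        · have : C w ≠ 0 := fun h' => hcuw (h.trans h'.symm)
          exact Finset.card_pos.mpr ⟨w, Finset.mem_filter.mpr ⟨Finset.mem_univ w, this⟩⟩
        · exact Finset.card_pos.mpr ⟨u, Finset.mem_filter.mpr ⟨Finset.mem_univ u, h⟩⟩
      have hp1 : (1:ℝ) ≤ pr := by rw [hprdef]; exact_mod_cast hXpos
      have hq1 : (1:ℝ) ≤ qr := by rw [hqrdef]; exact_mod_cast hYpos
      have hne : X.card ≠ Y.card := by
        obtain ⟨k, hk⟩ := hodd
        omega
      have hd1 : 1 ≤ (pr - qr)^2 := by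
        rcases Nat.lt_or_ge X.card Y.card with h|h
        · have : (X.card : ℝ) + 1 ≤ (Y.card : ℝ) := by exact_mod_cast h
          rw [hprdef, hqrdef]; nlinarith
        · have h' : Y.card < X.card := by omega
          have : (Y.card : ℝ) + 1 ≤ (X.card : ℝ) := by exact_mod_cast h'
          rw [hprdef, hqrdef]; nlinarith
      set s := Real.sqrt ((pr+qr)^2 + 8*(pr-qr)^2) with hsdef
      have hs2 : s^2 = (pr+qr)^2 + 8*(pr-qr)^2 := Real.sq_sqrt (by positivity)
      have hs0 : 0 ≤ s := Real.sqrt_nonneg _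
      clear_value pr qr
      clear_value s
      set E : ℝ := (5*(pr+qr)-8+s)/2 - (qr+4*pr-4) with hEdef
      set lam : ℝ := (5*(pr+qr)-8+s)/2 with hlamdef
      clear_value E lam
      have hβ : 0 < E := by
        rw [hEdef, hlamdef]
        nlinarith [hs2, hs0, hd1, mul_pos (show (0:ℝ) < pr by linarith)
          (show (0:ℝ) < qr by linarith), sq_nonneg (s - 3*(pr-qr)), sq_nonneg (s + 3*(pr-qr))]
      have hk := key qr E (by linarith) hβ
      have heq : 4*qr^2*(pr^2-pr) + pr*qr*(qr^2+qr*E) + pr*qr*(E^2+qr*E)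
            + 4*E^2*(qr^2-qr) = lam * (pr*qr^2 + qr*E^2) := by
        rw [hEdef, hlamdef]
        linear_combination (-(qr*((5*(pr+qr)-8+s)/2 - (qr+4*pr-4))/4)) * hs2
      have hNpos : 0 < pr*qr^2 + qr*E^2 := by
        have h1' : 0 < pr*qr^2 := mul_pos (by linarith) (pow_pos (by linarith) 2)
        have h2' : 0 ≤ qr*E^2 := mul_nonneg (by linarith) (sq_nonneg _)
        linarith
      have hlam : lam ≤ ρ := by
        rw [heq] at hk
        exact le_of_mul_le_mul_right hk hNpos
      rw [hncast]
      have hsq : Real.sqrt ((pr+qr)^2+8) ≤ s := by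
        rw [hsdef]
        exact Real.sqrt_le_sqrt (by nlinarith [hd1])
      linarith [hlam, hsq, hlamdef.le, hlamdef.ge]
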